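/- Let u : ℝ² → ℝ be defined by u(x) := Σ_{j=1}^{∞} i_j(x)·4^{−j} for x ∈ [0,1)² (and 0 outside), where i_j(x) ∈ {0,1,2,3} is the j-th quadrant digit of x. Then: (a) u is a fixed point of L, i.e. (Lu)(x) = u(x) for every x ∈ [0,1)²; (b) u is the unique fixed point of L in L¹([0,1)²): if w : ℝ² → ℝ is integrable on [0,1)² and (Lw)(x) = w(x) for Lebesgue-a.e. x ∈ [0,1)², then w = u Lebesgue-a.e. on [0,1)². -/

import Mathlib

open MeasureTheory Set Filter
open scoped ENNReal NNReal

noncomputable section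

/-- The half-open unit square `[0,1)²` in `ℝ²`. -/
def unitSq : Set (ℝ × ℝ) := Set.Ico (0:ℝ) 1 ×ˢ Set.Ico (0:ℝ) 1

/-- The four contractions `B₀, B₁, B₂, B₃` mapping `[0,1)²` onto its four half-open
dyadic subsquares (lower-left, lower-right, upper-left, upper-right). -/
def Bmap (i : Fin 4) (x : ℝ × ℝ) : ℝ × ℝ :=
  (x.1 / 2 + (if i.val % 2 = 1 then (1:ℝ)/2 else 0),
   x.2 / 2 + (if 2 ≤ i.val then (1:ℝ)/2 else 0))

/-- The inverse maps `A₀, A₁, A₂, A₃` of `B₀, …, B₃`. -/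
def Amap (i : Fin 4) (x : ℝ × ℝ) : ℝ × ℝ :=
  (2 * x.1 - (if i.val % 2 = 1 then (1:ℝ) else 0),
   2 * x.2 - (if 2 ≤ i.val then (1:ℝ) else 0))

/-- The four half-open dyadic subsquares `Q₀, Q₁, Q₂, Q₃` of `[0,1)²`. -/
def Qsub (i : Fin 4) : Set (ℝ × ℝ) := Bmap i '' unitSq

/-- The step function `ū = Σ_{i=0}^{3} (i/4)·1_{Q_i}`. -/
def ubar (x : ℝ × ℝ) : ℝ :=
  ∑ i : Fin 4, ((i.val : ℝ) / 4) * (Qsub i).indicator (fun _ => (1:ℝ)) x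

/-- The operator `L`: `(Lv)(x) = ū(x) + (1/4) Σ_i v(A_i x)·1_{Q_i}(x)` on `[0,1)²`,
extended by `0` outside. -/
def Lop (v : ℝ × ℝ → ℝ) : ℝ × ℝ → ℝ :=
  unitSq.indicator fun x =>
    ubar x + (1/4) * ∑ i : Fin 4, (Qsub i).indicator (fun y => v (Amap i y)) x

/-- The `j`-th binary digit `a_j(s) = ⌊2^j s⌋ − 2⌊2^{j−1} s⌋` of `s ∈ [0,1)` (`j ≥ 1`). -/
def bdigit (j : ℕ) (s : ℝ) : ℤ := ⌊(2:ℝ)^j * s⌋ - 2 * ⌊(2:ℝ)^(j-1) * s⌋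

/-- The `j`-th quadrant digit `i_j(x) = a_j(x₁) + 2 a_j(x₂) ∈ {0,1,2,3}` of `x ∈ [0,1)²`. -/
def qdigit (j : ℕ) (x : ℝ × ℝ) : ℤ := bdigit j x.1 + 2 * bdigit j x.2

/-- The Flat Mountain function `u(x) = Σ_{j≥1} i_j(x)·4^{−j}` on `[0,1)²`, `0` outside. -/
def uFM : ℝ × ℝ → ℝ :=
  unitSq.indicator fun x => ∑' j : ℕ, (qdigit (j+1) x : ℝ) / 4^(j+1)

/-- The iterates `u₀ = 0`, `u_{n+1} = L u_n`. -/
def uIter : ℕ → ℝ × ℝ → ℝ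
  | 0 => fun _ => 0
  | (n+1) => Lop (uIter n)

/-- The dyadic square `Q_{i₁,…,i_n} = B_{i₁} ∘ ⋯ ∘ B_{i_n} ([0,1)²)` indexed by a finite
sequence of quadrant digits. -/
def Qseq : List (Fin 4) → Set (ℝ × ℝ)
  | [] => unitSq
  | (i :: l) => Bmap i '' Qseq l

/-- The `j`-th base-4 digit `t_j = ⌊4^j t⌋ − 4⌊4^{j−1} t⌋` of `t ∈ [0,1)` (`j ≥ 1`). -/
def tdigit (j : ℕ) (t : ℝ) : ℤ := ⌊(4:ℝ)^j * t⌋ - 4 * ⌊(4:ℝ)^(j-1) * t⌋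

/-- The Lebesgue (Z-order) space-filling curve `γ`. -/
def lcurve (t : ℝ) : ℝ × ℝ :=
  (∑' j : ℕ, ((tdigit (j+1) t % 2 : ℤ) : ℝ) / 2^(j+1),
   ∑' j : ℕ, ((tdigit (j+1) t / 2 : ℤ) : ℝ) / 2^(j+1))

end

noncomputable section FMaux

namespace FMaux

open MeasureTheory Set Filter
open scoped ENNReal NNReal

/-! ### Basic set/map lemmas -/

lemma mem_unitSq {x : ℝ × ℝ} :
    x ∈ unitSq ↔ (0 ≤ x.1 ∧ x.1 < 1) ∧ (0 ≤ x.2 ∧ x.2 < 1) := by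
  simp [unitSq, Set.mem_Ico]

def e1 (i : Fin 4) : ℤ := if i.val % 2 = 1 then 1 else 0
def e2 (i : Fin 4) : ℤ := if 2 ≤ i.val then 1 else 0

lemma Amap_eq (i : Fin 4) (x : ℝ × ℝ) :
    Amap i x = (2 * x.1 - ((e1 i : ℤ) : ℝ), 2 * x.2 - ((e2 i : ℤ) : ℝ)) := by
  unfold Amap e1 e2; split_ifs <;> norm_num

lemma Bmap_Amap (i : Fin 4) (x : ℝ × ℝ) : Bmap i (Amap i x) = x := by
  unfold Bmap Amap
  split_ifs <;> (apply Prod.ext <;> simp <;> ring)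

lemma Amap_Bmap (i : Fin 4) (x : ℝ × ℝ) : Amap i (Bmap i x) = x := by
  unfold Bmap Amap
  split_ifs <;> (apply Prod.ext <;> simp <;> ring)

lemma mem_Qsub {i : Fin 4} {x : ℝ × ℝ} : x ∈ Qsub i ↔ Amap i x ∈ unitSq := by
  constructor
  · rintro ⟨y, hy, rfl⟩; rwa [Amap_Bmap]
  · intro h; exact ⟨Amap i x, h, Bmap_Amap i x⟩

lemma Qsub_eq_preimage (i : Fin 4) : Qsub i = Amap i ⁻¹' unitSq := by
  ext x; exact mem_Qsub

lemma Qsub_subset (i : Fin 4) : Qsub i ⊆ unitSq := by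
  rintro _ ⟨y, hy, rfl⟩
  rw [mem_unitSq] at hy ⊢
  unfold Bmap
  obtain ⟨⟨h1, h2⟩, h3, h4⟩ := hy
  split_ifs <;> refine ⟨⟨?_, ?_⟩, ?_, ?_⟩ <;> simp <;> linarith

lemma continuous_Amap (i : Fin 4) : Continuous (Amap i) := by
  unfold Amap; fun_prop

lemma measurable_Amap (i : Fin 4) : Measurable (Amap i) :=
  (continuous_Amap i).measurable

lemma measurableSet_unitSq : MeasurableSet unitSq :=
  measurableSet_Ico.prod measurableSet_Ico

lemma measurableSet_Qsub (i : Fin 4) : MeasurableSet (Qsub i) := by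
  rw [Qsub_eq_preimage]; exact measurable_Amap i measurableSet_unitSq

/-! ### Digit lemmas -/

lemma floor_two_mul_bounds (t : ℝ) : 2 * ⌊t⌋ ≤ ⌊2 * t⌋ ∧ ⌊2 * t⌋ ≤ 2 * ⌊t⌋ + 1 := by
  constructor
  · apply Int.le_floor.2
    push_cast
    nlinarith [Int.floor_le t]
  · have h1 : (⌊2 * t⌋ : ℝ) ≤ 2 * t := Int.floor_le _
    have h2 : 2 * t < 2 * (⌊t⌋ + 1) := by nlinarith [Int.lt_floor_add_one t]
    have h3 : (⌊2 * t⌋ : ℝ) < (2 * ⌊t⌋ + 1 : ℤ) + 1 := by push_cast; linarith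
    have h4 : ⌊2 * t⌋ < 2 * ⌊t⌋ + 1 + 1 := by exact_mod_cast h3
    omega

lemma bdigit_nonneg (m : ℕ) (s : ℝ) : 0 ≤ bdigit (m + 1) s := by
  unfold bdigit
  simp only [Nat.add_sub_cancel]
  have h : (2:ℝ)^(m+1) * s = 2 * ((2:ℝ)^m * s) := by ring
  rw [h]
  have := (floor_two_mul_bounds ((2:ℝ)^m * s)).1
  omega

lemma bdigit_le_one (m : ℕ) (s : ℝ) : bdigit (m + 1) s ≤ 1 := by
  unfold bdigit
  simp only [Nat.add_sub_cancel]
  have h : (2:ℝ)^(m+1) * s = 2 * ((2:ℝ)^m * s) := by ring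
  rw [h]
  have := (floor_two_mul_bounds ((2:ℝ)^m * s)).2
  omega

lemma bdigit_shift (j : ℕ) (s : ℝ) (a : ℤ) :
    bdigit (j + 1) (2 * s - (a : ℝ)) = bdigit (j + 2) s := by
  unfold bdigit
  simp only [show j + 2 - 1 = j + 1 from rfl, Nat.add_sub_cancel]
  have h1 : (2:ℝ)^(j+1) * (2 * s - (a:ℝ)) = 2^(j+2) * s - ((2^(j+1) * a : ℤ) : ℝ) := by
    push_cast; ring
  have h2 : (2:ℝ)^j * (2 * s - (a:ℝ)) = 2^(j+1) * s - ((2^j * a : ℤ) : ℝ) := by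
    push_cast; ring
  rw [h1, h2, Int.floor_sub_intCast, Int.floor_sub_intCast]
  ring

lemma qdigit_nonneg (m : ℕ) (x : ℝ × ℝ) : 0 ≤ qdigit (m + 1) x := by
  have := bdigit_nonneg m x.1
  have := bdigit_nonneg m x.2
  unfold qdigit; omega

lemma qdigit_le_three (m : ℕ) (x : ℝ × ℝ) : qdigit (m + 1) x ≤ 3 := by
  have := bdigit_le_one m x.1
  have := bdigit_le_one m x.2
  unfold qdigit; omega

lemma qdigit_shift (j : ℕ) (i : Fin 4) (x : ℝ × ℝ) :
    qdigit (j + 1) (Amap i x) = qdigit (j + 2) x := by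
  rw [Amap_eq]
  unfold qdigit
  simp only
  rw [bdigit_shift, bdigit_shift]

lemma bdigit_one_eq {s : ℝ} (h0 : 0 ≤ s) (h1 : s < 1) : bdigit 1 s = ⌊2 * s⌋ := by
  unfold bdigit
  norm_num [Int.floor_eq_zero_iff, Set.mem_Ico, h0, h1]

lemma qdigit_one_eq {i : Fin 4} {x : ℝ × ℝ} (hx : x ∈ Qsub i) :
    qdigit 1 x = (i.val : ℤ) := by
  have hxU := Qsub_subset i hx
  rw [mem_unitSq] at hxU
  have hA := mem_Qsub.mp hx
  rw [Amap_eq, mem_unitSq] at hA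
  obtain ⟨⟨a1, a2⟩, a3, a4⟩ := hA
  simp only at a1 a2 a3 a4
  have hf1 : ⌊2 * x.1⌋ = e1 i := by
    apply Int.floor_eq_iff.mpr ⟨by linarith, by linarith⟩
  have hf2 : ⌊2 * x.2⌋ = e2 i := by
    apply Int.floor_eq_iff.mpr ⟨by linarith, by linarith⟩
  unfold qdigit
  rw [bdigit_one_eq hxU.1.1 hxU.1.2, bdigit_one_eq hxU.2.1 hxU.2.2, hf1, hf2]
  fin_cases i <;> simp [e1, e2]

lemma Qsub_unique {i i' : Fin 4} {x : ℝ × ℝ} (h : x ∈ Qsub i) (h' : x ∈ Qsub i') :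
    i = i' := by
  have := qdigit_one_eq h
  have := qdigit_one_eq h'
  have : (i.val : ℤ) = (i'.val : ℤ) := by omega
  exact Fin.ext (by exact_mod_cast this)

lemma exists_Qsub {x : ℝ × ℝ} (hx : x ∈ unitSq) : ∃ i : Fin 4, x ∈ Qsub i := by
  rw [mem_unitSq] at hx
  obtain ⟨⟨h1, h2⟩, h3, h4⟩ := hx
  have he1 : e1 0 = 0 ∧ e1 1 = 1 ∧ e1 2 = 0 ∧ e1 3 = 1 := by decide
  have he2 : e2 0 = 0 ∧ e2 1 = 0 ∧ e2 2 = 1 ∧ e2 3 = 1 := by decide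
  by_cases c1 : x.1 < 1/2 <;> by_cases c2 : x.2 < 1/2
  · refine ⟨0, mem_Qsub.mpr (mem_unitSq.mpr ?_)⟩
    rw [Amap_eq]; rw [he1.1, he2.1]; norm_num
    refine ⟨⟨by linarith, by linarith⟩, by linarith, by linarith⟩
  · refine ⟨2, mem_Qsub.mpr (mem_unitSq.mpr ?_)⟩
    rw [Amap_eq]; rw [he1.2.2.1, he2.2.2.1]; norm_num
    refine ⟨⟨by linarith, by linarith⟩, by linarith, by linarith⟩
  · refine ⟨1, mem_Qsub.mpr (mem_unitSq.mpr ?_)⟩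
    rw [Amap_eq]; rw [he1.2.1, he2.2.1]; norm_num
    refine ⟨⟨by linarith, by linarith⟩, by linarith, by linarith⟩
  · refine ⟨3, mem_Qsub.mpr (mem_unitSq.mpr ?_)⟩
    rw [Amap_eq]; rw [he1.2.2.2, he2.2.2.2]; norm_num
    refine ⟨⟨by linarith, by linarith⟩, by linarith, by linarith⟩

/-! ### Summability and the series -/

lemma summable_qterm (x : ℝ × ℝ) :
    Summable (fun j : ℕ => ((qdigit (j+1) x : ℤ) : ℝ) / 4^(j+1)) := by
  have hg : Summable (fun j : ℕ => (3:ℝ) * (1/4)^(j+1)) :=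
    ((summable_geometric_of_lt_one (by norm_num) (by norm_num)).mul_left 3).comp_injective
      Nat.succ_injective
  apply Summable.of_norm_bounded hg
  intro j
  rw [Real.norm_eq_abs, abs_div, abs_of_nonneg (by positivity : (0:ℝ) ≤ 4^(j+1))]
  have hq : |((qdigit (j+1) x : ℤ) : ℝ)| ≤ 3 := by
    have h0 := qdigit_nonneg j x
    have h3 := qdigit_le_three j x
    rw [abs_le]
    exact ⟨by exact_mod_cast (by omega : (-3:ℤ) ≤ qdigit (j+1) x), by exact_mod_cast h3⟩
  have : (3:ℝ) * (1/4)^(j+1) = 3 / 4^(j+1) := by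
    rw [one_div, inv_pow]; ring
  rw [this]
  gcongr

lemma uFM_on {x : ℝ × ℝ} (hx : x ∈ unitSq) :
    uFM x = ∑' j : ℕ, ((qdigit (j+1) x : ℤ) : ℝ) / 4^(j+1) :=
  Set.indicator_of_mem hx _

lemma uFM_rec {i : Fin 4} {x : ℝ × ℝ} (hx : x ∈ Qsub i) :
    uFM x = (i.val : ℝ) / 4 + (1/4) * uFM (Amap i x) := by
  have hxU : x ∈ unitSq := Qsub_subset i hx
  have hA : Amap i x ∈ unitSq := mem_Qsub.mp hx
  rw [uFM_on hxU, uFM_on hA]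
  rw [Summable.tsum_eq_zero_add (summable_qterm x)]
  congr 1
  · rw [qdigit_one_eq hx]; norm_num
  · have : (fun j : ℕ => ((qdigit (j+1+1) x : ℤ) : ℝ) / 4^(j+1+1))
        = fun j : ℕ => (1/4) * (((qdigit (j+1) (Amap i x) : ℤ) : ℝ) / 4^(j+1)) := by
      funext j
      rw [qdigit_shift j i x]
      rw [pow_succ]
      ring
    rw [this, tsum_mul_left]

/-! ### Collapsing sums over quadrants -/

lemma ubar_eq {i : Fin 4} {x : ℝ × ℝ} (hx : x ∈ Qsub i) :
    ubar x = (i.val : ℝ) / 4 := by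
  unfold ubar
  rw [Finset.sum_eq_single i]
  · rw [Set.indicator_of_mem hx]; ring
  · intro b _ hb
    rw [Set.indicator_of_notMem (fun hmem => hb (Qsub_unique hmem hx)), mul_zero]
  · simp

lemma sum_indicator_eq (g : Fin 4 → ℝ × ℝ → ℝ) {i : Fin 4} {x : ℝ × ℝ} (hx : x ∈ Qsub i) :
    ∑ i' : Fin 4, (Qsub i').indicator (g i') x = g i x := by
  rw [Finset.sum_eq_single i]
  · exact Set.indicator_of_mem hx _
  · intro b _ hb
    exact Set.indicator_of_notMem (fun hmem => hb (Qsub_unique hmem hx)) _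
  · simp

lemma Lop_eq (v : ℝ × ℝ → ℝ) {i : Fin 4} {x : ℝ × ℝ} (hx : x ∈ Qsub i) :
    Lop v x = (i.val : ℝ) / 4 + (1/4) * v (Amap i x) := by
  unfold Lop
  rw [Set.indicator_of_mem (Qsub_subset i hx), ubar_eq hx,
    sum_indicator_eq (fun i' y => v (Amap i' y)) hx]

/-! ### Measurability and integrability of uFM -/

lemma measurable_bdigit_cast (j : ℕ) : Measurable fun s : ℝ => ((bdigit j s : ℤ) : ℝ) := by
  have h1 : Measurable fun s : ℝ => ((⌊(2:ℝ)^j * s⌋ : ℤ) : ℝ) :=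
    measurable_from_top.comp (Int.measurable_floor.comp (measurable_id.const_mul _))
  have h2 : Measurable fun s : ℝ => ((⌊(2:ℝ)^(j-1) * s⌋ : ℤ) : ℝ) :=
    measurable_from_top.comp (Int.measurable_floor.comp (measurable_id.const_mul _))
  have heq : (fun s : ℝ => ((bdigit j s : ℤ) : ℝ))
      = fun s => ((⌊(2:ℝ)^j * s⌋ : ℤ) : ℝ) - 2 * ((⌊(2:ℝ)^(j-1) * s⌋ : ℤ) : ℝ) := by
    funext s; unfold bdigit; push_cast; ring
  rw [heq]
  exact h1.sub (h2.const_mul 2)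

lemma measurable_qdigit_cast (j : ℕ) : Measurable fun x : ℝ × ℝ => ((qdigit j x : ℤ) : ℝ) := by
  have heq : (fun x : ℝ × ℝ => ((qdigit j x : ℤ) : ℝ))
      = fun x => ((bdigit j x.1 : ℤ) : ℝ) + 2 * ((bdigit j x.2 : ℤ) : ℝ) := by
    funext x; unfold qdigit; push_cast; ring
  rw [heq]
  exact ((measurable_bdigit_cast j).comp measurable_fst).add
    (((measurable_bdigit_cast j).comp measurable_snd).const_mul 2)

lemma measurable_uFM : Measurable uFM := by
  apply Measurable.indicator _ measurableSet_unitSq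
  apply measurable_of_tendsto_metrizable
    (f := fun n x => ∑ j ∈ Finset.range n, ((qdigit (j+1) x : ℤ) : ℝ) / 4^(j+1))
  · intro n
    apply Finset.measurable_sum
    intro j _
    exact (measurable_qdigit_cast (j+1)).div_const _
  · rw [tendsto_pi_nhds]
    intro x
    exact (summable_qterm x).hasSum.tendsto_sum_nat

lemma uFM_abs_le (x : ℝ × ℝ) : |uFM x| ≤ 1 := by
  by_cases hx : x ∈ unitSq
  · rw [uFM_on hx]
    have hsum := summable_qterm x
    have hg : Summable (fun j : ℕ => (3:ℝ) * (1/4)^(j+1)) :=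
      ((summable_geometric_of_lt_one (by norm_num) (by norm_num)).mul_left 3).comp_injective
        Nat.succ_injective
    have hnn : ∀ j : ℕ, 0 ≤ ((qdigit (j+1) x : ℤ) : ℝ) / 4^(j+1) := fun j =>
      div_nonneg (by exact_mod_cast qdigit_nonneg j x) (by positivity)
    rw [abs_of_nonneg (tsum_nonneg hnn)]
    have hle : ∑' j : ℕ, ((qdigit (j+1) x : ℤ) : ℝ) / 4^(j+1)
        ≤ ∑' j : ℕ, (3:ℝ) * (1/4)^(j+1) := by
      apply Summable.tsum_le_tsum _ hsum hg
      intro j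
      have h3 : ((qdigit (j+1) x : ℤ) : ℝ) ≤ 3 := by exact_mod_cast qdigit_le_three j x
      have heq : (3:ℝ) * (1/4)^(j+1) = 3 / 4^(j+1) := by rw [one_div, inv_pow]; ring
      rw [heq]
      gcongr
    have hval : ∑' j : ℕ, (3:ℝ) * (1/4)^(j+1) = 1 := by
      have heq : (fun j : ℕ => (3:ℝ) * (1/4)^(j+1)) = fun j => (3/4) * (1/4)^j := by
        funext j; rw [pow_succ]; ring
      rw [heq, tsum_mul_left, tsum_geometric_of_lt_one (by norm_num) (by norm_num)]
      norm_num
    linarith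
  · rw [uFM, Set.indicator_of_notMem hx]; norm_num

lemma volume_unitSq : (volume : Measure (ℝ × ℝ)) unitSq = 1 := by
  rw [unitSq, Measure.volume_eq_prod, Measure.prod_prod]
  simp [Real.volume_Ico]

lemma integrableOn_uFM : IntegrableOn uFM unitSq volume := by
  have hfm : IsFiniteMeasure (volume.restrict unitSq) := by
    constructor
    rw [Measure.restrict_apply_univ, volume_unitSq]
    exact ENNReal.one_lt_top
  refine ⟨measurable_uFM.aestronglyMeasurable, ?_⟩
  exact HasFiniteIntegral.of_bounded (C := 1)
    (Filter.Eventually.of_forall fun x => by rw [Real.norm_eq_abs]; exact uFM_abs_le x)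

/-! ### The pushforward of volume under Amap -/

lemma smul_prod_meas (c : ℝ≥0) (μ ν : Measure ℝ) [SigmaFinite μ] [SigmaFinite ν] :
    (c • μ).prod ν = c • (μ.prod ν) := by
  refine Measure.prod_eq fun s t hs ht => ?_
  simp only [Measure.smul_apply, Measure.prod_prod, ENNReal.smul_def, smul_eq_mul, mul_assoc]

lemma prod_smul_meas (c : ℝ≥0) (μ ν : Measure ℝ) [SigmaFinite μ] [SigmaFinite ν] :
    μ.prod (c • ν) = c • (μ.prod ν) := by
  refine Measure.prod_eq fun s t hs ht => ?_
  simp only [Measure.smul_apply, Measure.prod_prod, ENNReal.smul_def, smul_eq_mul]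
  ring

lemma map_affine_volume (c : ℝ) :
    Measure.map (fun t : ℝ => 2 * t - c) (volume : Measure ℝ)
      = (Real.toNNReal 2⁻¹ : ℝ≥0) • (volume : Measure ℝ) := by
  have hcomp : (fun t : ℝ => 2 * t - c) = (fun t : ℝ => t + (-c)) ∘ (fun t : ℝ => 2 * t) := by
    funext t; simp [sub_eq_add_neg]
  have hma : Measurable fun t : ℝ => t + (-c) := by fun_prop
  have hmb : Measurable fun t : ℝ => 2 * t := by fun_prop
  rw [hcomp, ← Measure.map_map hma hmb]
  have h2 : Measure.map (fun t : ℝ => 2 * t) (volume : Measure ℝ)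
      = ENNReal.ofReal |2⁻¹| • volume := Real.map_volume_mul_left two_ne_zero
  rw [h2, Measure.map_smul, map_add_right_eq_self volume (-c),
    abs_of_pos (by norm_num : (0:ℝ) < 2⁻¹)]
  rfl

lemma map_Amap_volume (i : Fin 4) :
    Measure.map (Amap i) (volume : Measure (ℝ × ℝ))
      = (Real.toNNReal 4⁻¹ : ℝ≥0) • (volume : Measure (ℝ × ℝ)) := by
  have hA : Amap i = Prod.map (fun t : ℝ => 2 * t - (if i.val % 2 = 1 then (1:ℝ) else 0))
      (fun t : ℝ => 2 * t - (if 2 ≤ i.val then (1:ℝ) else 0)) := rfl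
  have hm1 : Measurable fun t : ℝ => 2 * t - (if i.val % 2 = 1 then (1:ℝ) else 0) :=
    (measurable_id.const_mul 2).sub_const _
  have hm2 : Measurable fun t : ℝ => 2 * t - (if 2 ≤ i.val then (1:ℝ) else 0) :=
    (measurable_id.const_mul 2).sub_const _
  rw [hA, Measure.volume_eq_prod, ← Measure.map_prod_map _ _ hm1 hm2,
    map_affine_volume, map_affine_volume, smul_prod_meas, prod_smul_meas, smul_smul]
  congr 1
  rw [← Real.toNNReal_mul (by norm_num)]
  norm_num

lemma restrict_map_Amap (i : Fin 4) :
    (volume.restrict (Qsub i)).map (Amap i)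
      = (Real.toNNReal 4⁻¹ : ℝ≥0) • volume.restrict unitSq := by
  have h := Measure.restrict_map (μ := (volume : Measure (ℝ × ℝ)))
    (measurable_Amap i) measurableSet_unitSq
  have hrs : (((Real.toNNReal 4⁻¹ : ℝ≥0) • (volume : Measure (ℝ × ℝ))).restrict unitSq)
      = (Real.toNNReal 4⁻¹ : ℝ≥0) • (volume.restrict unitSq) := by
    ext s hs
    simp [Measure.restrict_apply hs]
  rw [map_Amap_volume, hrs, ← Qsub_eq_preimage] at h
  exact h.symm

lemma ofReal_quarter : ENNReal.ofReal (1/4 : ℝ) = ((Real.toNNReal 4⁻¹ : ℝ≥0) : ℝ≥0∞) := by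
  rw [ENNReal.ofReal]
  norm_num

lemma lintegral_Amap (i : Fin 4) (G : ℝ × ℝ → ℝ≥0∞)
    (hG : AEMeasurable G (volume.restrict unitSq)) :
    ∫⁻ x in Qsub i, G (Amap i x) = ENNReal.ofReal (1/4) * ∫⁻ x in unitSq, G x := by
  have hmap := restrict_map_Amap i
  have hG' : AEMeasurable G ((volume.restrict (Qsub i)).map (Amap i)) := by
    rw [hmap]
    exact hG.smul_measure _
  rw [← lintegral_map' hG' (measurable_Amap i).aemeasurable, hmap,
    show ((Real.toNNReal 4⁻¹ : ℝ≥0) • volume.restrict unitSq)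
      = ((Real.toNNReal 4⁻¹ : ℝ≥0) : ℝ≥0∞) • volume.restrict unitSq from rfl,
    lintegral_smul_measure, ofReal_quarter, smul_eq_mul]

lemma quarter_eq : ENNReal.ofReal (1/4 : ℝ) = (4 : ℝ≥0∞)⁻¹ := by
  rw [show (1/4 : ℝ) = 4⁻¹ by norm_num,
    ENNReal.ofReal_inv_of_pos (by norm_num), ENNReal.ofReal_ofNat]

lemma fixed_point : ∀ x ∈ unitSq, Lop uFM x = uFM x := by
  intro x hx
  obtain ⟨i, hi⟩ := exists_Qsub hx
  rw [Lop_eq uFM hi, uFM_rec hi]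

end FMaux
end FMaux

/-- The explicit base-4 digit series `u` is a fixed point of the contraction `L`, and it
is the unique fixed point of `L` in `L¹([0,1)²)` (up to a.e. equality). -/
theorem stmt7 :
    (∀ x ∈ unitSq, Lop uFM x = uFM x) ∧
    ∀ w : ℝ × ℝ → ℝ, IntegrableOn w unitSq volume →
      (∀ᵐ x ∂(volume.restrict unitSq), Lop w x = w x) →
      ∀ᵐ x ∂(volume.restrict unitSq), w x = uFM x := by
  constructor
  · exact FMaux.fixed_point
  · intro w hw hfix
    have huI : IntegrableOn uFM unitSq volume := FMaux.integrableOn_uFM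
    have hd : IntegrableOn (fun x => w x - uFM x) unitSq volume := hw.sub huI
    set d : ℝ × ℝ → ℝ := fun x => w x - uFM x with hdd
    set F : ℝ × ℝ → ℝ≥0∞ := fun x => ENNReal.ofReal |d x| with hFdef
    have hFmeas : AEMeasurable F (volume.restrict unitSq) := by
      have h1 : AEMeasurable d (volume.restrict unitSq) := hd.aemeasurable
      exact ENNReal.measurable_ofReal.comp_aemeasurable (continuous_abs.measurable.comp_aemeasurable h1)
    have hae : ∀ᵐ x ∂(volume.restrict unitSq),
        ∀ i : Fin 4, x ∈ Qsub i → d x = (1/4) * d (Amap i x) := by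
      filter_upwards [hfix] with x hLx
      intro i hxi
      have h1 : w x = (i.val : ℝ)/4 + (1/4) * w (Amap i x) := by
        rw [← hLx, FMaux.Lop_eq w hxi]
      have h2 : uFM x = (i.val : ℝ)/4 + (1/4) * uFM (Amap i x) := FMaux.uFM_rec hxi
      simp only [hdd]
      rw [h1, h2]; ring
    have hQae : ∀ i : Fin 4, ∀ᵐ x ∂(volume.restrict (Qsub i)),
        F x = ENNReal.ofReal (1/4) * F (Amap i x) := by
      intro i
      have hmono : ae (volume.restrict (Qsub i)) ≤ ae (volume.restrict unitSq) :=
        MeasureTheory.ae_mono (Measure.restrict_mono (FMaux.Qsub_subset i) le_rfl)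
      filter_upwards [hae.filter_mono hmono, ae_restrict_mem (FMaux.measurableSet_Qsub i)]
        with x hx hxQ
      simp only [hFdef]
      rw [hx i hxQ, abs_mul, abs_of_nonneg (by norm_num : (0:ℝ) ≤ 1/4),
        ENNReal.ofReal_mul (by norm_num : (0:ℝ) ≤ 1/4)]
    set I := ∫⁻ x in unitSq, F x with hI
    have hcover : unitSq = ⋃ i : Fin 4, Qsub i := by
      apply Set.Subset.antisymm
      · intro x hx
        obtain ⟨i, hi⟩ := FMaux.exists_Qsub hx
        exact Set.mem_iUnion.mpr ⟨i, hi⟩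
      · exact Set.iUnion_subset FMaux.Qsub_subset
    have hdisj : Pairwise (Function.onFun Disjoint Qsub) := by
      intro a b hab
      apply Set.disjoint_left.mpr
      intro x hxa hxb
      exact hab (FMaux.Qsub_unique hxa hxb)
    have hsplit : I = ∑ i : Fin 4, ∫⁻ x in Qsub i, F x := by
      rw [hI, hcover, lintegral_iUnion FMaux.measurableSet_Qsub hdisj, tsum_fintype]
    have hpiece : ∀ i : Fin 4, ∫⁻ x in Qsub i, F x
        = ENNReal.ofReal (1/4) * (ENNReal.ofReal (1/4) * I) := by
      intro i
      rw [lintegral_congr_ae (hQae i), lintegral_const_mul' _ _ ENNReal.ofReal_ne_top,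
        FMaux.lintegral_Amap i F hFmeas]
    have hIeq : I = (4:ℝ≥0∞)⁻¹ * I := by
      calc I = ∑ i : Fin 4, ∫⁻ x in Qsub i, F x := hsplit
        _ = ∑ _i : Fin 4, ENNReal.ofReal (1/4) * (ENNReal.ofReal (1/4) * I) := by
            exact Finset.sum_congr rfl fun i _ => hpiece i
        _ = 4 * (ENNReal.ofReal (1/4) * (ENNReal.ofReal (1/4) * I)) := by
            rw [Finset.sum_const, Finset.card_univ, Fintype.card_fin, nsmul_eq_mul]
            norm_num
        _ = (4:ℝ≥0∞)⁻¹ * I := by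
            rw [FMaux.quarter_eq, ← mul_assoc, ← mul_assoc,
              ENNReal.mul_inv_cancel (by norm_num) (by norm_num), one_mul]
    have hfin : I ≠ ⊤ := by
      have h2 := hd.2
      rw [MeasureTheory.HasFiniteIntegral] at h2
      have heq : I = ∫⁻ x in unitSq, (‖d x‖₊ : ℝ≥0∞) := by
        rw [hI]
        exact lintegral_congr fun x => (Real.enorm_eq_ofReal_abs (d x)).symm
      rw [heq]
      exact h2.ne
    have hI0 : I = 0 := by
      have htr : I.toReal = (4:ℝ)⁻¹ * I.toReal := by
        conv_lhs => rw [hIeq]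
        rw [ENNReal.toReal_mul]
        congr 1
        simp
      have h0 : I.toReal = 0 := by linarith
      rcases (ENNReal.toReal_eq_zero_iff I).mp h0 with h | h
      · exact h
      · exact absurd h hfin
    have hFz : ∀ᵐ x ∂(volume.restrict unitSq), F x = 0 := by
      have := (lintegral_eq_zero_iff' hFmeas).mp hI0
      filter_upwards [this] with x hx
      simpa using hx
    filter_upwards [hFz] with x hx
    have habs : |d x| = 0 := by
      have h1 : |d x| ≤ 0 := ENNReal.ofReal_eq_zero.mp hx
      exact le_antisymm h1 (abs_nonneg _)
    have : d x = 0 := abs_eq_zero.mp habs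
    have : w x - uFM x = 0 := this
    linarith
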